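/- Let G = (V,E) be an undirected graph, k ≥ 1, and define w(G) = Σ_{v∈V} min(1, k/(d(v)+1)). If u is a vertex of G with degree δ ≥ k such that every neighbor of u of degree ≥ k has degree ≥ δ, then w(G − u) ≤ w(G). -/

import Mathlib

/-- A set `T` is closed under the threshold-`k` activation rule: every vertex with at
least `k` neighbors in `T` belongs to `T`. -/
def ClosedUnder {V : Type*} (G : SimpleGraph V) (k : ℕ) (T : Set V) : Prop :=
  ∀ v : V, k ≤ {u : V | G.Adj v u ∧ u ∈ T}.ncard → v ∈ T

/-- `A` is contagious with threshold `k`: the activation process starting from `A`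
(equivalently, the least `ClosedUnder`-closed superset of `A`) activates every vertex. -/
def Contagious {V : Type*} (G : SimpleGraph V) (k : ℕ) (A : Set V) : Prop :=
  ∀ T : Set V, A ⊆ T → ClosedUnder G k T → ∀ v : V, v ∈ T

theorem stmt_3 {V : Type*} [Fintype V] [DecidableEq V] (G : SimpleGraph V)
    [DecidableRel G.Adj] (k : ℕ) (hk : 0 < k) (u : V) (δ : ℕ)
    (hδ : G.degree u = δ) (hkδ : k ≤ δ)
    (hmin : ∀ w : V, G.Adj u w → k ≤ G.degree w → δ ≤ G.degree w) :
    ∑ v : {x : V // x ≠ u},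
        min 1 ((k : ℝ) / ({w : {x : V // x ≠ u} |
          (G.induce {x : V | x ≠ u}).Adj v w}.ncard + 1)) ≤
      ∑ v : V, min 1 ((k : ℝ) / (G.degree v + 1)) := by
  classical
  set f : V → ℝ := fun v => min 1 ((k : ℝ) / (G.degree v + 1)) with hf
  set g : V → ℝ := fun v =>
    min 1 ((k : ℝ) / (((G.neighborFinset v).erase u).card + 1)) with hg
  have hδpos : 0 < δ := lt_of_lt_of_le hk hkδ
  have key : ∀ v : {x : V // x ≠ u},
      {w : {x : V // x ≠ u} | (G.induce {x : V | x ≠ u}).Adj v w}.ncard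
        = ((G.neighborFinset v.1).erase u).card := by
    intro v
    rw [Set.ncard_eq_toFinset_card']
    refine Finset.card_bij (fun w _ => w.1) ?_ ?_ ?_
    · intro a ha
      simp only [Set.mem_toFinset, Set.mem_setOf_eq, SimpleGraph.comap_adj,
        Function.Embedding.coe_subtype] at ha
      simp only [Finset.mem_erase, SimpleGraph.mem_neighborFinset]
      exact ⟨a.2, ha⟩
    · intro a _ b _ h; exact Subtype.ext h
    · intro b hb
      simp only [Finset.mem_erase, SimpleGraph.mem_neighborFinset] at hb
      exact ⟨⟨b, hb.1⟩, by
        simp only [Set.mem_toFinset, Set.mem_setOf_eq, SimpleGraph.comap_adj,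
          Function.Embedding.coe_subtype]
        exact hb.2, rfl⟩
  have hLHS : ∑ v : {x : V // x ≠ u},
      min 1 ((k : ℝ) / ({w : {x : V // x ≠ u} |
        (G.induce {x : V | x ≠ u}).Adj v w}.ncard + 1))
      = ∑ v ∈ Finset.univ.erase u, g v := by
    rw [Finset.sum_subtype (Finset.univ.erase u)
      (p := fun x => x ≠ u) (by simp) g]
    exact Finset.sum_congr rfl fun v _ => by rw [key v]
  rw [hLHS, hf]
  rw [← Finset.sum_erase_add Finset.univ _ (Finset.mem_univ u)]
  -- pointwise bound
  have hfu : f u = (k : ℝ) / (δ + 1) := by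
    rw [hf]
    simp only [hδ]
    exact min_eq_right (by
      rw [div_le_one (by positivity)]
      exact_mod_cast Nat.le_succ_of_le hkδ)
  set c : ℝ := (k : ℝ) / (δ * (δ + 1)) with hc
  have hptwise : ∀ v ∈ Finset.univ.erase u,
      g v ≤ f v + (if G.Adj u v then c else 0) := by
    intro v hv
    by_cases hadj : G.Adj u v
    · simp only [hadj, if_pos]
      have hd1 : 1 ≤ G.degree v := by
        rw [← SimpleGraph.card_neighborFinset_eq_degree]
        exact Finset.card_pos.mpr ⟨u, by simp [hadj.symm]⟩
      have hcardp : ((G.neighborFinset v).erase u).card = G.degree v - 1 := by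
        rw [Finset.card_erase_of_mem (by simp [hadj.symm]),
          SimpleGraph.card_neighborFinset_eq_degree]
      by_cases hdk : k ≤ G.degree v
      · have hδd : δ ≤ G.degree v := hmin v hadj hdk
        have hdpos : 0 < G.degree v := lt_of_lt_of_le hk hdk
        have hgv : g v = (k : ℝ) / (G.degree v) := by
          rw [hg]
          simp only [hcardp]
          have : ((G.degree v - 1 : ℕ) : ℝ) + 1 = (G.degree v : ℝ) := by
            rw [Nat.cast_sub hd1]; push_cast; ring
          rw [this]
          exact min_eq_right (by
            rw [div_le_one (by exact_mod_cast hdpos)]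
            exact_mod_cast hdk)
        have hfv : f v = (k : ℝ) / (G.degree v + 1) := by
          rw [hf]
          exact min_eq_right (by
            rw [div_le_one (by positivity)]
            exact_mod_cast Nat.le_succ_of_le hdk)
        rw [hgv, hfv, hc]
        have hD : (0:ℝ) < (G.degree v : ℝ) := by exact_mod_cast hdpos
        have hDel : (0:ℝ) < (δ : ℝ) := by exact_mod_cast hδpos
        have heq : (k : ℝ) / (G.degree v) - (k : ℝ) / (G.degree v + 1)
            = (k : ℝ) / ((G.degree v) * (G.degree v + 1)) := by
          field_simp
          ring
        have hle : (k : ℝ) / ((G.degree v) * (G.degree v + 1))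
            ≤ (k : ℝ) / (δ * (δ + 1)) := by
          gcongr <;>
            first
              | positivity
              | exact_mod_cast hδd
              | exact_mod_cast Nat.cast_pos.mpr hδpos
        linarith
      · -- degree v < k : g v ≤ 1 = f v ≤ f v + c
        have hfv : f v = 1 := by
          rw [hf]
          refine min_eq_left ?_
          rw [le_div_iff₀ (by positivity), one_mul]
          push_cast
          have : G.degree v + 1 ≤ k := Nat.succ_le_of_lt (lt_of_not_ge hdk)
          exact_mod_cast this
        have hgv : g v ≤ 1 := min_le_left _ _
        have hcpos : 0 ≤ c := by positivity
        simp only [hfv]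
        linarith
    · simp only [hadj, if_neg, not_false_iff, add_zero]
      have : (G.neighborFinset v).erase u = G.neighborFinset v := by
        apply Finset.erase_eq_of_notMem
        simp only [SimpleGraph.mem_neighborFinset]
        exact fun h => hadj h.symm
      simp only [hg, hf, this, SimpleGraph.card_neighborFinset_eq_degree]
      exact le_refl _
  calc ∑ v ∈ Finset.univ.erase u, g v
      ≤ ∑ v ∈ Finset.univ.erase u, (f v + (if G.Adj u v then c else 0)) :=
        Finset.sum_le_sum hptwise
    _ = ∑ v ∈ Finset.univ.erase u, f v
        + ∑ v ∈ Finset.univ.erase u, (if G.Adj u v then c else 0) := by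
        rw [Finset.sum_add_distrib]
    _ ≤ ∑ v ∈ Finset.univ.erase u, f v + f u := by
        have hsum : ∑ v ∈ Finset.univ.erase u, (if G.Adj u v then c else 0)
            = δ * c := by
          rw [← Finset.sum_filter, Finset.sum_const]
          have : (Finset.univ.erase u).filter (G.Adj u ·) = G.neighborFinset u := by
            ext w
            simp only [Finset.mem_filter, Finset.mem_erase, Finset.mem_univ,
              SimpleGraph.mem_neighborFinset, and_true, true_and]
            constructor
            · exact fun h => h.2
            · exact fun h => ⟨(G.ne_of_adj h.symm), h⟩
          rw [this, SimpleGraph.card_neighborFinset_eq_degree, hδ]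
          simp [nsmul_eq_mul]
        rw [hsum, hfu, hc]
        have : (δ : ℝ) * ((k : ℝ) / (δ * (δ + 1))) = (k : ℝ) / (δ + 1) := by
          field_simp
        rw [this]
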